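/- Let X be a subset of Cantor space with the Baire property such that for every x ∈ X and every i, flip(x,i) ∉ X. Then X is meager. -/

import Mathlib

open MeasureTheory Set Filter

/-- The fair-coin (product Bernoulli(1/2)) measure on Cantor space, realized as the
pushforward of Lebesgue measure on [0,1) under the binary-digit map. -/
noncomputable def coin : Measure (ℕ → Bool) :=
  Measure.map (fun r n => decide (⌊r * 2 ^ (n + 1)⌋ % 2 = 1)) (volume.restrict (Set.Ico (0:ℝ) 1))

/-- Flip the i-th bit of x. -/
def bitFlip (i : ℕ) (x : ℕ → Bool) : ℕ → Bool := Function.update x i (!x i)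

/-- The basic cylinder of sequences extending the finite binary string s. -/
def cyl (s : List Bool) : Set (ℕ → Bool) := {x | ∀ k, k < s.length → x k = s.getD k false}

/-- x with its n-th bit deleted (later bits shifted left). -/
def del (n : ℕ) (x : ℕ → Bool) : ℕ → Bool := fun k => if k < n then x k else x (k + 1)

/-- x and y differ in only finitely many coordinates. -/
def FinDiff (x y : ℕ → Bool) : Prop := {n | x n ≠ y n}.Finite

lemma bitFlip_invol (n : ℕ) : Function.Involutive (bitFlip n) := by
  intro y
  funext k
  rcases eq_or_ne k n with rfl | hk
  · simp [bitFlip]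
  · simp [bitFlip, Function.update_of_ne hk]

lemma bitFlip_cont (n : ℕ) : Continuous (bitFlip n) := by
  refine continuous_pi fun k => ?_
  rcases eq_or_ne k n with rfl | hk
  · simpa [bitFlip, Function.comp_def] using (continuous_of_discreteTopology (f := Bool.not)).comp (continuous_apply k)
  · simpa [bitFlip, Function.update_of_ne hk] using continuous_apply k

lemma bitFlip_openMap (n : ℕ) : IsOpenMap (bitFlip n) := by
  intro u hu
  have : bitFlip n '' u = bitFlip n ⁻¹' u := by
    ext y; constructor
    · rintro ⟨z, hz, rfl⟩; simpa [bitFlip_invol n z] using hz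
    · intro hy; exact ⟨bitFlip n y, hy, bitFlip_invol n y⟩
  rw [this]; exact hu.preimage (bitFlip_cont n)

theorem meagre_of_no_one_bit_difference (X : Set (ℕ → Bool)) (hX : BaireMeasurableSet X)
    (h : ∀ x ∈ X, ∀ i : ℕ, bitFlip i x ∉ X) : IsMeagre X := by
  obtain ⟨U, hUopen, hUeq⟩ := hX.residualEq_isOpen
  have hdiff : IsMeagre (U \ X) := by
    rw [IsMeagre]
    refine mem_of_superset hUeq fun a ha => ?_
    simp only [mem_compl_iff, mem_diff, not_and, not_not]
    intro haU
    simp only [mem_setOf_eq] at ha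
    rw [show (a ∈ X) = (a ∈ U) from ha]
    exact haU
  rcases U.eq_empty_or_nonempty with rfl | ⟨x, hxU⟩
  · rw [IsMeagre]
    refine mem_of_superset hUeq fun a ha => ?_
    intro hXa
    have ha' : X a = (∅ : Set (ℕ → Bool)) a := ha
    have : (∅ : Set (ℕ → Bool)) a := ha' ▸ hXa
    exact this
  · exfalso
    obtain ⟨I, u, hu, hsub⟩ := isOpen_pi_iff.mp hUopen x hxU
    set C : Set (ℕ → Bool) := {y | ∀ i ∈ I, y i = x i} with hC
    have hCU : C ⊆ U := fun y hy => hsub fun i hi => (hy i hi) ▸ (hu i hi).2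
    have hCopen : IsOpen C := by
      have : C = ⋂ i ∈ I, (fun y : ℕ → Bool => y i) ⁻¹' {x i} := by
        ext y; simp [hC]
      rw [this]
      exact isOpen_biInter_finset fun i _ => (isOpen_discrete _).preimage (continuous_apply i)
    set n : ℕ := (I.sup id) + 1 with hn
    have hnI : n ∉ I := fun hmem => by
      have := Finset.le_sup (f := id) hmem
      simp only [id] at this
      omega
    have hCpre : bitFlip n ⁻¹' C = C := by
      ext y
      simp only [mem_preimage, hC, mem_setOf_eq]
      refine forall₂_congr fun i hi => ?_
      have : i ≠ n := fun e => hnI (e ▸ hi)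
      rw [show bitFlip n y i = y i from Function.update_of_ne this _ _]
    have hM2 : IsMeagre (bitFlip n ⁻¹' (U \ X)) :=
      hdiff.preimage_of_isOpenMap (bitFlip_cont n) (bitFlip_openMap n)
    have hCmeagre : IsMeagre C := by
      have hsub2 : C ⊆ (U \ X) ∪ bitFlip n ⁻¹' (U \ X) := by
        intro y hy
        by_cases hyX : y ∈ X
        · right
          have hy' : bitFlip n y ∈ C := by rw [← hCpre] at hy; exact hy
          exact mem_preimage.mpr ⟨hCU hy', h y hyX n⟩
        · exact Or.inl ⟨hCU hy, hyX⟩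
      refine IsMeagre.mono hsub2 ?_
      rw [IsMeagre, compl_union]
      exact inter_mem hdiff hM2
    have hdense : Dense Cᶜ := dense_of_mem_residual hCmeagre
    obtain ⟨y, hyC, hyCc⟩ := hdense.inter_open_nonempty C hCopen ⟨x, fun i _ => rfl⟩
    exact hyCc hyC
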